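/- arXiv:1006.2853 — 4 statements merged into one kernel-verified Lean document; each statement's English description precedes it below -/
import Mathlib

section
/- If C = Nb(S_p ∥₀ S_q) where S_p ∥₀ S_q is the exact (0-approximate) composition of deterministic metric systems S_p and S_q with identical output computed via identity on states, then S_p ∥₀ C ≼₀ S_q (the controlled plant is exactly simulated by the specification). -/
structure Sys (X U Y : Type*) where
  states : Set X
  init : Set X
  inputs : Set U
  tr : Set (X × U × X)
  H : X → Y

def IsApproxSim {X1 U1 X2 U2 Y : Type*} [PseudoMetricSpace Y]
    (S1 : Sys X1 U1 Y) (S2 : Sys X2 U2 Y) (ε : ℝ) (R : X1 → X2 → Prop) : Prop :=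
  (∀ x1 ∈ S1.init, ∃ x2 ∈ S2.init, R x1 x2) ∧
  (∀ x1 x2, R x1 x2 → dist (S1.H x1) (S2.H x2) ≤ ε) ∧
  (∀ x1 x2, R x1 x2 → ∀ u1 x1', (x1, u1, x1') ∈ S1.tr →
    ∃ u2 x2', (x2, u2, x2') ∈ S2.tr ∧ R x1' x2')

def ApproxSimBy {X1 U1 X2 U2 Y : Type*} [PseudoMetricSpace Y]
    (S1 : Sys X1 U1 Y) (S2 : Sys X2 U2 Y) (ε : ℝ) : Prop :=
  ∃ R, IsApproxSim S1 S2 ε R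

def IsApproxBisim {X1 U1 X2 U2 Y : Type*} [PseudoMetricSpace Y]
    (S1 : Sys X1 U1 Y) (S2 : Sys X2 U2 Y) (ε : ℝ) (R : X1 → X2 → Prop) : Prop :=
  IsApproxSim S1 S2 ε R ∧ IsApproxSim S2 S1 ε (fun x2 x1 => R x1 x2)

def ApproxBisimBy {X1 U1 X2 U2 Y : Type*} [PseudoMetricSpace Y]
    (S1 : Sys X1 U1 Y) (S2 : Sys X2 U2 Y) (ε : ℝ) : Prop :=
  ∃ R, IsApproxBisim S1 S2 ε R

def Subsys {X U Y : Type*} (S1 S2 : Sys X U Y) : Prop :=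
  S1.states ⊆ S2.states ∧ S1.init ⊆ S2.init ∧ S1.inputs ⊆ S2.inputs ∧
  S1.tr ⊆ S2.tr ∧ ∀ x ∈ S1.states, S1.H x = S2.H x

def Nonblocking {X U Y : Type*} (S : Sys X U Y) : Prop :=
  ∀ x ∈ S.states, ∃ u x', u ∈ S.inputs ∧ x' ∈ S.states ∧ (x, u, x') ∈ S.tr

def WF {X U Y : Type*} (S : Sys X U Y) : Prop :=
  S.init ⊆ S.states ∧ ∀ t ∈ S.tr, t.1 ∈ S.states ∧ t.2.1 ∈ S.inputs ∧ t.2.2 ∈ S.states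

def IsNb {X U Y : Type*} (S N : Sys X U Y) : Prop :=
  WF N ∧ Nonblocking N ∧ Subsys N S ∧
  ∀ S', WF S' → Nonblocking S' → Subsys S' S → Subsys S' N

def Deterministic {X U Y : Type*} (S : Sys X U Y) : Prop :=
  ∀ x u y1 y2, (x, u, y1) ∈ S.tr → (x, u, y2) ∈ S.tr → y1 = y2

def compStates {X1 U1 X2 U2 Y : Type*} [PseudoMetricSpace Y]
    (S1 : Sys X1 U1 Y) (S2 : Sys X2 U2 Y) (ε : ℝ) : Set (X1 × X2) :=
  {p | p.1 ∈ S1.states ∧ p.2 ∈ S2.states ∧ dist (S1.H p.1) (S2.H p.2) ≤ ε}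

def comp {X1 U1 X2 U2 Y : Type*} [PseudoMetricSpace Y]
    (S1 : Sys X1 U1 Y) (S2 : Sys X2 U2 Y) (ε : ℝ) : Sys (X1 × X2) (U1 × U2) Y where
  states := compStates S1 S2 ε
  init := compStates S1 S2 ε ∩ (S1.init ×ˢ S2.init)
  inputs := S1.inputs ×ˢ S2.inputs
  tr := {t | t.1 ∈ compStates S1 S2 ε ∧ t.2.2 ∈ compStates S1 S2 ε ∧
         t.2.1.1 ∈ S1.inputs ∧ t.2.1.2 ∈ S2.inputs ∧
         (t.1.1, t.2.1.1, t.2.2.1) ∈ S1.tr ∧ (t.1.2, t.2.1.2, t.2.2.2) ∈ S2.tr}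
  H := fun p => S1.H p.1

/-- If `C = Nb(S_p ∥₀ S_q)` for deterministic metric systems `S_p`, `S_q` whose outputs
are the identity on a common state set, then `S_p ∥₀ C ≼₀ S_q`. -/
theorem controlled_plant_sim_spec {Xs Up Uq : Type*} [MetricSpace Xs]
    (Sp : Sys Xs Up Xs) (Sq : Sys Xs Uq Xs)
    (hHp : Sp.H = id) (hHq : Sq.H = id)
    (hdp : Deterministic Sp) (hdq : Deterministic Sq)
    (C : Sys (Xs × Xs) (Up × Uq) Xs) (hC : IsNb (comp Sp Sq 0) C) :
    ApproxSimBy (comp Sp C 0) Sq 0 := by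
  obtain ⟨hWF, hNb, hSub, hMax⟩ := hC
  obtain ⟨hst, hin, hinp, htr, hH⟩ := hSub
  -- key facts about C states
  have hCst : ∀ x ∈ C.states, x.1 = x.2 ∧ C.H x = x.1 := by
    intro x hx
    have h1 := hst hx
    obtain ⟨ha, hb, hd⟩ := h1
    have heq : x.1 = x.2 := by
      have := dist_le_zero.mp hd
      simpa [hHp, hHq] using this
    refine ⟨heq, ?_⟩
    rw [hH x hx]
    simp [comp, hHp]
  refine ⟨fun p x2 => p.1 = x2 ∧ p.2.2 = x2, ?_, ?_, ?_⟩
  · rintro ⟨a, b, c⟩ ⟨⟨hpa, hpbc, hpd⟩, ha, hbc⟩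
    have hbc' := hin hbc
    obtain ⟨⟨hb, hc, hdbc⟩, hbi, hci⟩ := hbc'
    have hbceq : b = c := by simpa [hHp, hHq] using dist_le_zero.mp hdbc
    have habc := hCst (b, c) hpbc
    have hab : a = b := by
      have := dist_le_zero.mp hpd
      simp only [hHp, id] at this
      rw [this, habc.2]
    exact ⟨c, hci, by simp [hab, hbceq]⟩
  · rintro ⟨a, b, c⟩ x2 ⟨h1, h2⟩
    simp only [comp, hHp, hHq, id, dist_le_zero]
    exact h1
  · rintro ⟨a, b, c⟩ x2 ⟨h1, h2⟩ ⟨u1, up, uq⟩ ⟨a', b', c'⟩ htrm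
    obtain ⟨⟨hsa, hsbc, hsd⟩, ⟨hta, htbc, htd⟩, hu1, hupq, hpt, hct⟩ := htrm
    have hct' := htr hct
    obtain ⟨hs', ht', hup, huq, hbp, hcq⟩ := hct'
    have htc := hCst (b', c') htbc
    have hta' : a' = b' := by
      have := dist_le_zero.mp htd
      simp only [hHp, id] at this
      rw [this, htc.2]
    refine ⟨uq, c', ?_, ?_, ?_⟩
    · simpa [← h2] using hcq
    · exact hta'.trans htc.1
    · rfl
end

section
/- Non-blockingness of the closed loop: if C is a non-blocking sub-system of S_p ∥₀ S_q (where S_p is deterministic with output map the identity on states), then the composition S_p ∥₀ C is non-blocking. -/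
/-- Non-blockingness of the closed loop: if `C` is a non-blocking sub-system of
`S_p ∥₀ S_q` (with `S_p` deterministic and output the identity on states), then
`S_p ∥₀ C` is non-blocking. -/
theorem closed_loop_nonblocking {Xs Up Uq : Type*} [MetricSpace Xs]
    (Sp : Sys Xs Up Xs) (Sq : Sys Xs Uq Xs)
    (hHp : Sp.H = id) (hdp : Deterministic Sp)
    (C : Sys (Xs × Xs) (Up × Uq) Xs)
    (hsub : Subsys C (comp Sp Sq 0)) (hnb : Nonblocking C) :
    Nonblocking (comp Sp C 0) := by
  rintro ⟨p1, p2, q⟩ ⟨hp1, hpqC, hdist⟩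
  obtain ⟨hst, hin, hinp, htr, hH⟩ := hsub
  -- C.H agrees with comp's H, which is Sp.H of first component = identity
  have hCH : C.H (p2, q) = p2 := by
    have := hH (p2, q) hpqC
    simpa [comp, hHp] using this
  have hp1p2 : p1 = p2 := by
    have : Sp.H p1 = C.H (p2, q) := by
      simpa [dist_le_zero] using hdist
    simpa [hHp, hCH] using this
  obtain ⟨⟨u2, u3⟩, ⟨p2', q'⟩, huC, hx'C, htrC⟩ := hnb (p2, q) hpqC
  have htrcomp := htr htrC
  obtain ⟨hs0, hs1, hu1, hu2, htp, htq⟩ := htrcomp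
  refine ⟨(u2, (u2, u3)), (p2', (p2', q')), ⟨hu1, huC⟩, ?_, ?_⟩
  · exact ⟨hs1.1, hx'C, by
      have := hH (p2', q') hx'C
      simp [comp, hHp] at this ⊢
      simp [this]⟩
  · refine ⟨⟨hp1, hpqC, hdist⟩, ?_, hu1, huC, ?_, htrC⟩
    · refine ⟨hs1.1, hx'C, ?_⟩
      have := hH (p2', q') hx'C
      simp [comp, hHp] at this ⊢
      simp [this]
    · rw [hp1p2]; exact htp
end

section
/- Non-blockingness of the approximate closed loop: if S_τ(P) and S_p are θ-approximately bisimilar and C is a non-blocking sub-system of S_p ∥₀ S_q, then S_τ(P) ∥_θ C is non-blocking. -/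
/-- Non-blockingness of the approximate closed loop: if `S_τ(P)` and `S_p` are
θ-approximately bisimilar (via the θ-closeness relation) and `C` is a non-blocking
sub-system of `S_p ∥₀ S_q`, then `S_τ(P) ∥_θ C` is non-blocking. -/
theorem approx_closed_loop_nonblocking {X1 U1 X2 U2 X3 U3 Y : Type*} [PseudoMetricSpace Y]
    (P : Sys X1 U1 Y) (Sp : Sys X2 U2 Y) (Sq : Sys X3 U3 Y)
    (θ : ℝ) (hθ : 0 ≤ θ) (hwfP : WF P)
    (hbisim : IsApproxBisim P Sp θ (fun x y => dist (P.H x) (Sp.H y) ≤ θ))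
    (C : Sys (X2 × X3) (U2 × U3) Y)
    (hsub : Subsys C (comp Sp Sq 0)) (hnb : Nonblocking C) :
    Nonblocking (comp P C θ) := by
  rintro ⟨p1, pc⟩ ⟨hp1, hpc, hdist⟩
  -- C.H pc = Sp.H pc.1
  have hH : C.H pc = Sp.H pc.1 := hsub.2.2.2.2 pc hpc
  -- nonblocking step of C
  obtain ⟨u23, pc', hu23, hpc', htrC⟩ := hnb pc hpc
  have htrComp := hsub.2.2.2.1 htrC
  have htrSp : (pc.1, u23.1, pc'.1) ∈ Sp.tr := htrComp.2.2.2.2.1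
  -- relation between p1 and pc.1
  have hR : dist (P.H p1) (Sp.H pc.1) ≤ θ := by rw [← hH]; exact hdist
  obtain ⟨u1, p1', htrP, hR'⟩ := hbisim.2.2.2 pc.1 p1 hR u23.1 pc'.1 htrSp
  have hstep := hwfP.2 _ htrP
  have hH' : C.H pc' = Sp.H pc'.1 := hsub.2.2.2.2 pc' hpc'
  have hdist' : dist (P.H p1') (C.H pc') ≤ θ := by rw [hH']; exact hR'
  refine ⟨(u1, u23), (p1', pc'), ⟨hstep.2.1, hu23⟩,
    ⟨hstep.2.2, hpc', hdist'⟩,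
    ⟨hp1, hpc, hdist⟩, ⟨hstep.2.2, hpc', hdist'⟩, hstep.2.1, hu23, htrP, htrC⟩
end

section
/- Correct-by-design main theorem (abstract form): let S_τ(P) ≅_{θ_p} S_p and S_q ≼_{θ_q} S_τ(Q) be metric systems with common output set, and suppose θ_p + θ_q ≤ ε. Then S_τ(P) ∥_{θ_p} Nb(S_p ∥₀ S_q) ≼_ε S_τ(Q). -/
/-- Correct-by-design main theorem (abstract form): if `S_τ(P) ≅_{θ_p} S_p`,
`S_q ≼_{θ_q} S_τ(Q)` and `θ_p + θ_q ≤ ε`, then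
`S_τ(P) ∥_{θ_p} Nb(S_p ∥₀ S_q) ≼_ε S_τ(Q)`. -/
theorem correct_by_design {X1 U1 X2 U2 X3 U3 X4 U4 Y : Type*} [PseudoMetricSpace Y]
    (P : Sys X1 U1 Y) (Sp : Sys X2 U2 Y) (Sq : Sys X3 U3 Y) (Q : Sys X4 U4 Y)
    (θp θq ε : ℝ) (hθp : 0 ≤ θp) (hθq : 0 ≤ θq) (hε : θp + θq ≤ ε)
    (hbisim : ApproxBisimBy P Sp θp)
    (hq : ApproxSimBy Sq Q θq)
    (N : Sys (X2 × X3) (U2 × U3) Y) (hN : IsNb (comp Sp Sq 0) N) :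
    ApproxSimBy (comp P N θp) Q ε := by
  obtain ⟨Rq, hqInit, hqOut, hqTr⟩ := hq
  obtain ⟨hWF, _, hSub, _⟩ := hN
  refine ⟨fun p x4 => p ∈ (comp P N θp).states ∧ Rq p.2.2 x4, ?_, ?_, ?_⟩
  · rintro ⟨x1, x2, x3⟩ ⟨hcs, hi1, hiN⟩
    have h3 : x3 ∈ Sq.init := (hSub.2.1 hiN).2.2
    obtain ⟨x4, hx4, hR⟩ := hqInit x3 h3
    exact ⟨x4, hx4, ⟨hcs, hR⟩⟩
  · rintro ⟨x1, x2, x3⟩ x4 ⟨⟨hs1, hsN, hd⟩, hR⟩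
    have hNs : (x2, x3) ∈ (comp Sp Sq 0).states := hSub.1 hsN
    have hH : N.H (x2, x3) = Sp.H x2 := hSub.2.2.2.2 _ hsN
    have hd2 : dist (Sp.H x2) (Sq.H x3) ≤ 0 := hNs.2.2
    have hd3 : dist (Sq.H x3) (Q.H x4) ≤ θq := hqOut x3 x4 hR
    calc dist ((comp P N θp).H (x1, x2, x3)) (Q.H x4)
        = dist (P.H x1) (Q.H x4) := rfl
      _ ≤ dist (P.H x1) (Sq.H x3) + dist (Sq.H x3) (Q.H x4) := dist_triangle _ _ _
      _ ≤ (dist (P.H x1) (Sp.H x2) + dist (Sp.H x2) (Sq.H x3)) + dist (Sq.H x3) (Q.H x4) := by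
          gcongr; exact dist_triangle _ _ _
      _ ≤ (θp + 0) + θq := by
          gcongr
          · simpa [hH] using hd
      _ ≤ ε := by linarith
  · rintro ⟨x1, x2, x3⟩ x4 ⟨-, hR⟩ ⟨u1, u2, u3⟩ ⟨x1', x2', x3'⟩ htr
    obtain ⟨-, hst', -, -, -, htrN⟩ := htr
    have htrC : ((x2, x3), (u2, u3), (x2', x3')) ∈ (comp Sp Sq 0).tr := hSub.2.2.2.1 htrN
    obtain ⟨u4, x4', hx4tr, hR'⟩ := hqTr x3 x4 hR u3 x3' htrC.2.2.2.2.2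
    exact ⟨u4, x4', hx4tr, hst', hR'⟩
end
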